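/- The function $f(z) = z\log\log|z|^{-2}$ (extended by $f(0)=0$) is not continuously differentiable on any neighbourhood of $0$ in $\mathbb{C} \cong \mathbb{R}^2$: there is no $C^1$ function on $B_{1/2}$ agreeing with $f$. -/

import Mathlib

open Complex Metric Filter

private lemma loglog_tendsto :
    Tendsto (fun t : ℝ => Real.log (Real.log (t ^ (-2 : ℝ)))) (nhdsWithin 0 (Set.Ioi 0))
      atTop := by
  have h1 : Tendsto Real.log (nhdsWithin 0 (Set.Ioi 0)) atBot :=
    Real.tendsto_log_nhdsGT_zero
  have h2 : Tendsto (fun t : ℝ => (-2 : ℝ) * Real.log t)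
      (nhdsWithin 0 (Set.Ioi 0)) atTop := by
    have h2' : Tendsto (fun t : ℝ => 2 * Real.log t) (nhdsWithin 0 (Set.Ioi 0)) atBot :=
      h1.const_mul_atBot two_pos
    have := Filter.tendsto_neg_atBot_atTop.comp h2'
    refine this.congr fun t => by simp [Function.comp]
  have h3 : Tendsto (fun t : ℝ => Real.log (t ^ (-2 : ℝ)))
      (nhdsWithin 0 (Set.Ioi 0)) atTop := by
    refine h2.congr' ?_
    filter_upwards [self_mem_nhdsWithin] with t (ht : t ∈ Set.Ioi 0)
    rw [Real.log_rpow ht]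
  exact Real.tendsto_log_atTop.comp h3

/-- The function `f(z) = z log log |z|⁻²` (with `f(0) = 0`) is not `C¹` near the
origin: there is no `C¹` function (in the real sense) on `B_{1/2}` agreeing with `f`. -/
theorem stmt5 :
    ¬ ∃ g : ℂ → ℂ,
        ContDiffOn ℝ 1 g (ball (0 : ℂ) (1/2)) ∧
        Set.EqOn g
          (fun z : ℂ => if z = 0 then (0 : ℂ)
            else z * (Real.log (Real.log (‖z‖ ^ (-2 : ℝ))) : ℂ))
          (ball (0 : ℂ) (1/2)) := by
  rintro ⟨g, hg, heq⟩
  have h0 : (0 : ℂ) ∈ ball (0 : ℂ) (1/2) := by simp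
  have hg0 : g 0 = 0 := by simpa using heq h0
  -- g is differentiable at 0
  have hdg : DifferentiableAt ℝ g 0 :=
    ((hg.differentiableOn one_ne_zero).differentiableAt (isOpen_ball.mem_nhds h0))
  -- h(t) = g(t) for real t is differentiable at 0
  set h : ℝ → ℂ := fun t => g (t : ℂ) with hh
  have hco : DifferentiableAt ℝ (fun t : ℝ => (t : ℂ)) 0 :=
    Complex.ofRealCLM.differentiable.differentiableAt
  have hdh' : DifferentiableAt ℝ (g ∘ fun t : ℝ => (t : ℂ)) 0 :=
    DifferentiableAt.comp 0 (by simpa using hdg) hco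
  have hdh : DifferentiableAt ℝ h 0 := hdh'
  have hder : HasDerivAt h (deriv h 0) 0 := hdh.hasDerivAt
  have hslope : Tendsto (slope h 0) (nhdsWithin 0 {(0:ℝ)}ᶜ) (nhds (deriv h 0)) :=
    (hasDerivAt_iff_tendsto_slope).1 hder
  have hle : nhdsWithin (0:ℝ) (Set.Ioi 0) ≤ nhdsWithin 0 {(0:ℝ)}ᶜ :=
    nhdsWithin_mono _ (fun t ht => ne_of_gt ht)
  have hslope' : Tendsto (slope h 0) (nhdsWithin 0 (Set.Ioi 0)) (nhds (deriv h 0)) :=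
    hslope.mono_left hle
  -- eventually slope h 0 t = log log t^{-2}
  have heqslope : ∀ᶠ t in nhdsWithin (0:ℝ) (Set.Ioi 0),
      slope h 0 t = (Real.log (Real.log (t ^ (-2 : ℝ))) : ℂ) := by
    filter_upwards [Ioo_mem_nhdsGT_of_mem (by norm_num : (0:ℝ) ∈ Set.Ico 0 (1/2))]
      with t ht
    obtain ⟨ht0, ht2⟩ := ht
    have htball : (t : ℂ) ∈ ball (0 : ℂ) (1/2) := by
      rw [mem_ball_zero_iff]
      simp only [Complex.norm_real, Real.norm_eq_abs, abs_of_pos ht0]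
      linarith
    have htne : (t : ℂ) ≠ 0 := by exact_mod_cast ne_of_gt ht0
    have : h t = (t : ℂ) * (Real.log (Real.log (t ^ (-2 : ℝ))) : ℂ) := by
      have := heq htball
      simp only [htne, if_false] at this
      rw [hh]
      simpa [Complex.norm_real, abs_of_pos ht0] using this
    have hh0 : h 0 = 0 := by simpa [hh] using hg0
    rw [slope_def_module, hh0, this]
    rw [sub_zero, sub_zero, Complex.real_smul]
    push_cast
    rw [← mul_assoc, inv_mul_cancel₀ htne, one_mul]
  -- so the slope's norm tends to atTop
  have hnorm : Tendsto (fun t => ‖slope h 0 t‖) (nhdsWithin (0:ℝ) (Set.Ioi 0)) atTop := by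
    have : Tendsto (fun t : ℝ => ‖(Real.log (Real.log (t ^ (-2 : ℝ))) : ℂ)‖)
        (nhdsWithin 0 (Set.Ioi 0)) atTop := by
      have := loglog_tendsto
      refine tendsto_atTop_mono' _ ?_ this
      filter_upwards with t
      simp [Complex.norm_real, le_abs_self]
    exact this.congr' (by filter_upwards [heqslope] with t ht; rw [ht])
  -- but it also tends to ‖deriv h 0‖ : contradiction
  have hnorm' : Tendsto (fun t => ‖slope h 0 t‖) (nhdsWithin (0:ℝ) (Set.Ioi 0))
      (nhds ‖deriv h 0‖) := hslope'.norm
  have h1 : ∀ᶠ t in nhdsWithin (0:ℝ) (Set.Ioi 0),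
      ‖slope h 0 t‖ < ‖deriv h 0‖ + 1 :=
    hnorm'.eventually_lt_const (by linarith [norm_nonneg (deriv h 0)])
  have h2 : ∀ᶠ t in nhdsWithin (0:ℝ) (Set.Ioi 0),
      ‖deriv h 0‖ + 1 ≤ ‖slope h 0 t‖ := hnorm.eventually_ge_atTop _
  have : ∀ᶠ t in nhdsWithin (0:ℝ) (Set.Ioi 0), False := by
    filter_upwards [h1, h2] with t ht1 ht2; linarith
  exact (this.exists).elim (fun _ hf => hf)
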